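/- Let λ ∈ Σ⁺ be a positive restricted root with dim 𝔤_λ > 1. Then every ℝ-linear map α : 𝔫 → ℂ satisfying α([Z, W]) = 0 for all Z ∈ 𝔪 and W ∈ 𝔫 vanishes identically on the root space 𝔤_λ. Equivalently, every element of 𝔤_λ is of the form [Z, X] with Z ∈ 𝔪 and X ∈ 𝔤_λ. -/

import Mathlib

/-- The restricted root space `𝔤_λ = {X ∈ 𝔤 : [H, X] = λ(H) • X for all H ∈ 𝔞}`. -/
def rootSpace' {𝔤 : Type} [LieRing 𝔤] [LieAlgebra ℝ 𝔤]
    (𝔞 : LieSubalgebra ℝ 𝔤) (lam : Module.Dual ℝ 𝔞) : Submodule ℝ 𝔤 where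
  carrier := {X | ∀ H : 𝔞, ⁅(H : 𝔤), X⁆ = lam H • X}
  add_mem' := fun {a b} ha hb H => by rw [lie_add, ha H, hb H, smul_add]
  zero_mem' := fun H => by simp
  smul_mem' := fun t X hX H => by rw [lie_smul, hX H, smul_comm]

/-- The subspace `𝔪 = {Z ∈ 𝔨 : [H, Z] = 0 for all H ∈ 𝔞}`, where `𝔨` is the fixed-point
set of the Cartan involution `σ`. -/
def mSub {𝔤 : Type} [LieRing 𝔤] [LieAlgebra ℝ 𝔤]
    (σ : 𝔤 →ₗ⁅ℝ⁆ 𝔤) (𝔞 : LieSubalgebra ℝ 𝔤) : Submodule ℝ 𝔤 where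
  carrier := {Z | σ Z = Z ∧ ∀ H : 𝔞, ⁅(H : 𝔤), Z⁆ = 0}
  add_mem' := fun {a b} ha hb =>
    ⟨by rw [map_add, ha.1, hb.1], fun H => by rw [lie_add, ha.2 H, hb.2 H, add_zero]⟩
  zero_mem' := ⟨σ.map_zero, fun H => lie_zero _⟩
  smul_mem' := fun t X hX =>
    ⟨by rw [map_smul, hX.1], fun H => by rw [lie_smul, hX.2 H, smul_zero]⟩

/-- The set of positive restricted roots, with respect to a basis `φ` of `𝔞*` and the map
`λ ↦ H_λ` determined by the Killing form. -/
def posRootSet {𝔤 : Type} [LieRing 𝔤] [LieAlgebra ℝ 𝔤] {r : ℕ}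
    (𝔞 : LieSubalgebra ℝ 𝔤) (φ : Module.Basis (Fin r) ℝ (Module.Dual ℝ 𝔞))
    (Hv : Module.Dual ℝ 𝔞 → 𝔞) : Set (Module.Dual ℝ 𝔞) :=
  {lam | lam ≠ 0 ∧ rootSpace' 𝔞 lam ≠ ⊥ ∧
    ∃ k : Fin r, 0 < φ k (Hv lam) ∧ ∀ j : Fin r, j < k → φ j (Hv lam) = 0}

/-- The subspace `𝔫 = ⊕_{λ ∈ Σ⁺} 𝔤_λ`. -/
def nSub {𝔤 : Type} [LieRing 𝔤] [LieAlgebra ℝ 𝔤] {r : ℕ}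
    (𝔞 : LieSubalgebra ℝ 𝔤) (φ : Module.Basis (Fin r) ℝ (Module.Dual ℝ 𝔞))
    (Hv : Module.Dual ℝ 𝔞 → 𝔞) : Submodule ℝ 𝔤 :=
  ⨆ lam ∈ posRootSet 𝔞 φ Hv, rootSpace' 𝔞 lam


section Aux2
variable {𝔤 : Type} [LieRing 𝔤] [LieAlgebra ℝ 𝔤]

lemma mem_rootSpace' {𝔞 : LieSubalgebra ℝ 𝔤} {lam : Module.Dual ℝ 𝔞} {X : 𝔤} :
    X ∈ rootSpace' 𝔞 lam ↔ ∀ H : 𝔞, ⁅(H : 𝔤), X⁆ = lam H • X := Iff.rfl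

/-- `σ` maps `𝔤_λ` into `𝔤_{-λ}`. -/
lemma sigma_root (σ : 𝔤 →ₗ⁅ℝ⁆ 𝔤) (hσinv : ∀ X, σ (σ X) = X)
    {𝔞 : LieSubalgebra ℝ 𝔤} (h𝔞p : ∀ X ∈ 𝔞, σ X = -X) {lam : Module.Dual ℝ 𝔞} {X : 𝔤}
    (hX : X ∈ rootSpace' 𝔞 lam) (H : 𝔞) : ⁅(H : 𝔤), σ X⁆ = -(lam H) • σ X := by
  have h1 : σ ⁅σ (H : 𝔤), X⁆ = ⁅(H : 𝔤), σ X⁆ := by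
    rw [LieHom.map_lie, hσinv]
  rw [h𝔞p _ H.2, neg_lie, mem_rootSpace'.1 hX H] at h1
  rw [← h1]
  simp [neg_smul]

/-- If `Z` commutes with `𝔞` and `X ∈ 𝔤_λ` then `⁅Z, X⁆ ∈ 𝔤_λ`. -/
lemma bracket_centralizer_root {𝔞 : LieSubalgebra ℝ 𝔤} {lam : Module.Dual ℝ 𝔞} {Z X : 𝔤}
    (hZ : ∀ H : 𝔞, ⁅(H : 𝔤), Z⁆ = 0) (hX : X ∈ rootSpace' 𝔞 lam) :
    ⁅Z, X⁆ ∈ rootSpace' 𝔞 lam := by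
  intro H
  rw [leibniz_lie, hZ H, zero_lie, zero_add, mem_rootSpace'.1 hX H, lie_smul]

/-- `⁅X, W⁆` commutes with `𝔞` when `X ∈ 𝔤_λ` and `W` has weight `-λ`. -/
lemma bracket_opp_central {𝔞 : LieSubalgebra ℝ 𝔤} {lam : Module.Dual ℝ 𝔞} {X W : 𝔤}
    (hX : X ∈ rootSpace' 𝔞 lam) (hW : ∀ H : 𝔞, ⁅(H : 𝔤), W⁆ = -(lam H) • W) (H : 𝔞) :
    ⁅(H : 𝔤), ⁅X, W⁆⁆ = 0 := by
  rw [leibniz_lie, mem_rootSpace'.1 hX H, hW, smul_lie, lie_smul]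
  simp

/-- Maximality: an element of `𝔭` commuting with `𝔞` lies in `𝔞`. -/
lemma mem_a_of_p_central (σ : 𝔤 →ₗ⁅ℝ⁆ 𝔤) (𝔞 : LieSubalgebra ℝ 𝔤)
    (h𝔞ab : ∀ X Y : 𝔤, X ∈ 𝔞 → Y ∈ 𝔞 → ⁅X, Y⁆ = 0)
    (h𝔞p : ∀ X ∈ 𝔞, σ X = -X)
    (h𝔞max : ∀ 𝔟 : LieSubalgebra ℝ 𝔤, (∀ X Y : 𝔤, X ∈ 𝔟 → Y ∈ 𝔟 → ⁅X, Y⁆ = 0) →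
      (∀ X ∈ 𝔟, σ X = -X) → 𝔞 ≤ 𝔟 → 𝔟 = 𝔞)
    (W : 𝔤) (hWp : σ W = -W) (hWc : ∀ H : 𝔞, ⁅(H : 𝔤), W⁆ = 0) : W ∈ 𝔞 := by
  set S : Submodule ℝ 𝔤 := 𝔞.toSubmodule ⊔ (ℝ ∙ W) with hS
  have hdec : ∀ x ∈ S, ∃ a ∈ 𝔞, ∃ t : ℝ, x = a + t • W := by
    intro x hx
    rcases Submodule.mem_sup.1 hx with ⟨a, ha, y, hy, rfl⟩
    rcases Submodule.mem_span_singleton.1 hy with ⟨t, rfl⟩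
    exact ⟨a, ha, t, rfl⟩
  have hab : ∀ x ∈ S, ∀ y ∈ S, ⁅x, y⁆ = 0 := by
    intro x hx y hy
    rcases hdec x hx with ⟨a, ha, t, rfl⟩
    rcases hdec y hy with ⟨b, hb, u, rfl⟩
    have hbW : ⁅b, W⁆ = 0 := hWc ⟨b, hb⟩
    have haW : ⁅a, W⁆ = 0 := hWc ⟨a, ha⟩
    have hWb : ⁅W, b⁆ = 0 := by rw [← lie_skew, hbW, neg_zero]
    rw [add_lie, lie_add, lie_add, lie_smul, lie_smul, smul_lie, smul_lie,
      h𝔞ab a b ha hb, haW, hWb]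
    simp
  let 𝔟 : LieSubalgebra ℝ 𝔤 :=
    { toSubmodule := S
      lie_mem' := fun {x y} hx hy => by
        rw [hab x hx y hy]; exact S.zero_mem }
  have hmem : ∀ x : 𝔤, x ∈ 𝔟 ↔ x ∈ S := fun x => Iff.rfl
  have h𝔟p : ∀ x ∈ 𝔟, σ x = -x := by
    intro x hx
    rcases hdec x ((hmem x).1 hx) with ⟨a, ha, t, rfl⟩
    rw [map_add, map_smul, hWp, h𝔞p a ha, smul_neg, neg_add]
  have hle : 𝔞 ≤ 𝔟 := by
    intro x hx
    exact (hmem x).2 (Submodule.mem_sup_left hx)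
  have heq := h𝔞max 𝔟 (fun x y hx hy => hab x ((hmem x).1 hx) y ((hmem y).1 hy)) h𝔟p hle
  have hW𝔟 : W ∈ 𝔟 :=
    (hmem W).2 (Submodule.mem_sup_right (Submodule.mem_span_singleton_self W))
  rwa [heq] at hW𝔟

end Aux2


section AuxStatement4

variable {𝔤 : Type} [LieRing 𝔤] [LieAlgebra ℝ 𝔤]

/-- The Cartan involution as a Lie algebra equivalence. -/
def sigmaEquiv (σ : 𝔤 →ₗ⁅ℝ⁆ 𝔤) (hσinv : ∀ X, σ (σ X) = X) : 𝔤 ≃ₗ⁅ℝ⁆ 𝔤 :=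
  { σ with invFun := σ, left_inv := hσinv, right_inv := hσinv }

lemma killing_symm (x y : 𝔤) : killingForm ℝ 𝔤 x y = killingForm ℝ 𝔤 y x :=
  LieModule.traceForm_comm ℝ 𝔤 𝔤 x y

lemma killing_invariant (x y z : 𝔤) :
    killingForm ℝ 𝔤 ⁅x, y⁆ z = killingForm ℝ 𝔤 x ⁅y, z⁆ :=
  LieModule.traceForm_apply_lie_apply ℝ 𝔤 𝔤 x y z

lemma killing_sigma (σ : 𝔤 →ₗ⁅ℝ⁆ 𝔤) (hσinv : ∀ X, σ (σ X) = X) (x y : 𝔤) :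
    killingForm ℝ 𝔤 (σ x) (σ y) = killingForm ℝ 𝔤 x y :=
  LieAlgebra.killingForm_of_equiv_apply (sigmaEquiv σ hσinv) x y

lemma killing_sigma_swap (σ : 𝔤 →ₗ⁅ℝ⁆ 𝔤) (hσinv : ∀ X, σ (σ X) = X) (x y : 𝔤) :
    killingForm ℝ 𝔤 (σ x) y = killingForm ℝ 𝔤 x (σ y) := by
  conv_lhs => rw [← hσinv y]
  exact killing_sigma σ hσinv x (σ y)

/-- positive semidefiniteness of `⟨x,y⟩ = -β(x, σ y)`. -/
lemma ip_nonneg (σ : 𝔤 →ₗ⁅ℝ⁆ 𝔤)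
    (hσpos : ∀ X : 𝔤, X ≠ 0 → 0 < -(killingForm ℝ 𝔤 X (σ X))) (x : 𝔤) :
    0 ≤ -(killingForm ℝ 𝔤 x (σ x)) := by
  rcases eq_or_ne x 0 with rfl | h
  · simp
  · exact (hσpos x h).le

lemma ip_zero (σ : 𝔤 →ₗ⁅ℝ⁆ 𝔤)
    (hσpos : ∀ X : 𝔤, X ≠ 0 → 0 < -(killingForm ℝ 𝔤 X (σ X))) (x : 𝔤)
    (h : killingForm ℝ 𝔤 x (σ x) = 0) : x = 0 := by
  by_contra hx
  have := hσpos x hx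
  rw [h] at this; simp at this

/-- `β(z, h) = 0` when `σ z = z` and `σ h = -h`. -/
lemma killing_k_p (σ : 𝔤 →ₗ⁅ℝ⁆ 𝔤) (hσinv : ∀ X, σ (σ X) = X) (z h : 𝔤)
    (hz : σ z = z) (hh : σ h = -h) : killingForm ℝ 𝔤 z h = 0 := by
  have := killing_sigma σ hσinv z h
  rw [hz, hh] at this
  simp only [map_neg] at this
  linarith

/-- `β` is positive definite on `𝔭`. -/
lemma killing_p_pos (σ : 𝔤 →ₗ⁅ℝ⁆ 𝔤)
    (hσpos : ∀ X : 𝔤, X ≠ 0 → 0 < -(killingForm ℝ 𝔤 X (σ X))) (w : 𝔤)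
    (hw : σ w = -w) (hw0 : w ≠ 0) : 0 < killingForm ℝ 𝔤 w w := by
  have := hσpos w hw0
  rw [hw] at this
  simpa using this

end AuxStatement4

section Aux3
variable {𝔤 : Type} [LieRing 𝔤] [LieAlgebra ℝ 𝔤]

lemma a_part_formula (σ : 𝔤 →ₗ⁅ℝ⁆ 𝔤) (hσinv : ∀ X, σ (σ X) = X)
    (hσpos : ∀ X : 𝔤, X ≠ 0 → 0 < -(killingForm ℝ 𝔤 X (σ X)))
    (𝔞 : LieSubalgebra ℝ 𝔤)
    (h𝔞ab : ∀ X Y : 𝔤, X ∈ 𝔞 → Y ∈ 𝔞 → ⁅X, Y⁆ = 0)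
    (h𝔞p : ∀ X ∈ 𝔞, σ X = -X)
    (h𝔞max : ∀ 𝔟 : LieSubalgebra ℝ 𝔤, (∀ X Y : 𝔤, X ∈ 𝔟 → Y ∈ 𝔟 → ⁅X, Y⁆ = 0) →
      (∀ X ∈ 𝔟, σ X = -X) → 𝔞 ≤ 𝔟 → 𝔟 = 𝔞)
    (Hv : Module.Dual ℝ 𝔞 → 𝔞)
    (hHv : ∀ (lam : Module.Dual ℝ 𝔞) (H : 𝔞),
      killingForm ℝ 𝔤 (Hv lam : 𝔤) (H : 𝔤) = lam H)
    (lam : Module.Dual ℝ 𝔞) {X Y : 𝔤}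
    (hX : X ∈ rootSpace' 𝔞 lam) (hY : Y ∈ rootSpace' 𝔞 lam) :
    ⁅X, σ Y⁆ - ⁅σ X, Y⁆ = (2 * killingForm ℝ 𝔤 X (σ Y)) • (Hv lam : 𝔤) := by
  set β := killingForm ℝ 𝔤 with hβ
  set P : 𝔤 := ⁅X, σ Y⁆ - ⁅σ X, Y⁆ with hP
  have hs1 : σ ⁅X, σ Y⁆ = ⁅σ X, Y⁆ := by rw [LieHom.map_lie, hσinv]
  have hs2 : σ ⁅σ X, Y⁆ = ⁅X, σ Y⁆ := by rw [LieHom.map_lie, hσinv]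
  have hPp : σ P = -P := by
    rw [hP, map_sub, hs1, hs2]; abel
  have hPc : ∀ H : 𝔞, ⁅(H : 𝔤), P⁆ = 0 := by
    intro H
    have h1 : ⁅(H : 𝔤), ⁅X, σ Y⁆⁆ = 0 :=
      bracket_opp_central hX (fun H' => sigma_root σ hσinv h𝔞p hY H') H
    have h2 : ⁅(H : 𝔤), ⁅Y, σ X⁆⁆ = 0 :=
      bracket_opp_central hY (fun H' => sigma_root σ hσinv h𝔞p hX H') H
    have h2' : ⁅(H : 𝔤), ⁅σ X, Y⁆⁆ = 0 := by
      rw [← lie_skew (σ X) Y, lie_neg, h2, neg_zero]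
    rw [hP, lie_sub, h1, h2', sub_zero]
  have hP𝔞 : P ∈ 𝔞 := mem_a_of_p_central σ 𝔞 h𝔞ab h𝔞p h𝔞max P hPp hPc
  have hβP : ∀ H : 𝔞, β P ↑H = 2 * β X (σ Y) * lam H := by
    intro H
    have h1 : β ⁅X, σ Y⁆ ↑H = lam H * β X (σ Y) := by
      rw [hβ, killing_invariant]
      have hb : ⁅σ Y, (H : 𝔤)⁆ = lam H • σ Y := by
        rw [← lie_skew, sigma_root σ hσinv h𝔞p hY H]; simp
      rw [hb, map_smul, smul_eq_mul]
    have h2 : β ⁅σ X, Y⁆ ↑H = -(lam H) * β X (σ Y) := by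
      rw [hβ, killing_invariant]
      have hb : ⁅Y, (H : 𝔤)⁆ = -(lam H) • Y := by
        rw [← lie_skew, mem_rootSpace'.1 hY H]; simp
      rw [hb, map_smul, smul_eq_mul, killing_sigma_swap σ hσinv]
    rw [hP, map_sub, LinearMap.sub_apply, h1, h2]; ring
  set s : ℝ := 2 * β X (σ Y) with hs
  set D : 𝔞 := (⟨P, hP𝔞⟩ : 𝔞) - s • Hv lam with hD
  have hDcoe : (D : 𝔤) = P - s • (Hv lam : 𝔤) := by
    rfl
  have hβD : ∀ H : 𝔞, β (D : 𝔤) ↑H = 0 := by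
    intro H
    rw [hDcoe, map_sub, LinearMap.sub_apply, map_smul, LinearMap.smul_apply,
      hβP H, hβ]
    rw [hHv lam H]
    simp only [smul_eq_mul]
    ring
  have hD0 : (D : 𝔤) = 0 := by
    by_contra hne
    have hpos := killing_p_pos σ hσpos (D : 𝔤) (h𝔞p _ D.2) hne
    rw [hβD D] at hpos
    exact lt_irrefl 0 hpos
  rw [hDcoe] at hD0
  have := sub_eq_zero.1 hD0
  rw [hP] at this
  exact this

end Aux3
section Aux4
variable {𝔤 : Type} [LieRing 𝔤] [LieAlgebra ℝ 𝔤]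

/-- `⁅σ X, X⁆ = -β(X, σX) • H_λ` for `X ∈ 𝔤_λ`. -/
lemma sigma_bracket_self (σ : 𝔤 →ₗ⁅ℝ⁆ 𝔤) (hσinv : ∀ X, σ (σ X) = X)
    (hσpos : ∀ X : 𝔤, X ≠ 0 → 0 < -(killingForm ℝ 𝔤 X (σ X)))
    (𝔞 : LieSubalgebra ℝ 𝔤)
    (h𝔞ab : ∀ X Y : 𝔤, X ∈ 𝔞 → Y ∈ 𝔞 → ⁅X, Y⁆ = 0)
    (h𝔞p : ∀ X ∈ 𝔞, σ X = -X)
    (h𝔞max : ∀ 𝔟 : LieSubalgebra ℝ 𝔤, (∀ X Y : 𝔤, X ∈ 𝔟 → Y ∈ 𝔟 → ⁅X, Y⁆ = 0) →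
      (∀ X ∈ 𝔟, σ X = -X) → 𝔞 ≤ 𝔟 → 𝔟 = 𝔞)
    (Hv : Module.Dual ℝ 𝔞 → 𝔞)
    (hHv : ∀ (lam : Module.Dual ℝ 𝔞) (H : 𝔞),
      killingForm ℝ 𝔤 (Hv lam : 𝔤) (H : 𝔤) = lam H)
    (lam : Module.Dual ℝ 𝔞) {X : 𝔤} (hX : X ∈ rootSpace' 𝔞 lam) :
    ⁅σ X, X⁆ = (-(killingForm ℝ 𝔤 X (σ X))) • (Hv lam : 𝔤) := by
  have h := a_part_formula σ hσinv hσpos 𝔞 h𝔞ab h𝔞p h𝔞max Hv hHv lam hX hX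
  rw [show ⁅X, σ X⁆ - ⁅σ X, X⁆ = -(2 : ℝ) • ⁅σ X, X⁆ by
    rw [← lie_skew (σ X) X]; module] at h
  have := smul_right_injective 𝔤 (by norm_num : (-2 : ℝ) ≠ 0)
  apply this
  show (-2 : ℝ) • ⁅σ X, X⁆ = (-2 : ℝ) • ((-(killingForm ℝ 𝔤 X (σ X))) • (Hv lam : 𝔤))
  rw [h]
  module

/-- If `β(X, σ Y) = 0` then `⁅X, σ Y⁆ = ⁅σ X, Y⁆`. -/
lemma bracket_eq_of_orth (σ : 𝔤 →ₗ⁅ℝ⁆ 𝔤) (hσinv : ∀ X, σ (σ X) = X)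
    (hσpos : ∀ X : 𝔤, X ≠ 0 → 0 < -(killingForm ℝ 𝔤 X (σ X)))
    (𝔞 : LieSubalgebra ℝ 𝔤)
    (h𝔞ab : ∀ X Y : 𝔤, X ∈ 𝔞 → Y ∈ 𝔞 → ⁅X, Y⁆ = 0)
    (h𝔞p : ∀ X ∈ 𝔞, σ X = -X)
    (h𝔞max : ∀ 𝔟 : LieSubalgebra ℝ 𝔤, (∀ X Y : 𝔤, X ∈ 𝔟 → Y ∈ 𝔟 → ⁅X, Y⁆ = 0) →
      (∀ X ∈ 𝔟, σ X = -X) → 𝔞 ≤ 𝔟 → 𝔟 = 𝔞)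
    (Hv : Module.Dual ℝ 𝔞 → 𝔞)
    (hHv : ∀ (lam : Module.Dual ℝ 𝔞) (H : 𝔞),
      killingForm ℝ 𝔤 (Hv lam : 𝔤) (H : 𝔤) = lam H)
    (lam : Module.Dual ℝ 𝔞) {X Y : 𝔤}
    (hX : X ∈ rootSpace' 𝔞 lam) (hY : Y ∈ rootSpace' 𝔞 lam)
    (horth : killingForm ℝ 𝔤 X (σ Y) = 0) :
    ⁅X, σ Y⁆ = ⁅σ X, Y⁆ := by
  have h := a_part_formula σ hσinv hσpos 𝔞 h𝔞ab h𝔞p h𝔞max Hv hHv lam hX hY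
  rw [horth] at h
  simpa [sub_eq_zero] using h

end Aux4
section Aux5
variable {𝔤 : Type} [LieRing 𝔤] [LieAlgebra ℝ 𝔤]

lemma key_vanishing (σ : 𝔤 →ₗ⁅ℝ⁆ 𝔤) (hσinv : ∀ X, σ (σ X) = X)
    (hσpos : ∀ X : 𝔤, X ≠ 0 → 0 < -(killingForm ℝ 𝔤 X (σ X)))
    (𝔞 : LieSubalgebra ℝ 𝔤)
    (h𝔞ab : ∀ X Y : 𝔤, X ∈ 𝔞 → Y ∈ 𝔞 → ⁅X, Y⁆ = 0)
    (h𝔞p : ∀ X ∈ 𝔞, σ X = -X)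
    (h𝔞max : ∀ 𝔟 : LieSubalgebra ℝ 𝔤, (∀ X Y : 𝔤, X ∈ 𝔟 → Y ∈ 𝔟 → ⁅X, Y⁆ = 0) →
      (∀ X ∈ 𝔟, σ X = -X) → 𝔞 ≤ 𝔟 → 𝔟 = 𝔞)
    (Hv : Module.Dual ℝ 𝔞 → 𝔞)
    (hHv : ∀ (lam : Module.Dual ℝ 𝔞) (H : 𝔞),
      killingForm ℝ 𝔤 (Hv lam : 𝔤) (H : 𝔤) = lam H)
    (lam : Module.Dual ℝ 𝔞) (hlam0 : lam ≠ 0)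
    {Y V : 𝔤} (hY : Y ∈ rootSpace' 𝔞 lam) (hY0 : Y ≠ 0)
    (hV : V ∈ rootSpace' 𝔞 lam)
    (horth : killingForm ℝ 𝔤 Y (σ V) = 0)
    (hbr : ∀ Z : 𝔤, Z ∈ mSub σ 𝔞 → killingForm ℝ 𝔤 ⁅Z, Y⁆ (σ V) = 0) :
    V = 0 := by
  -- `H_λ ≠ 0` and `λ(H_λ) > 0`
  have hHvne : (Hv lam : 𝔤) ≠ 0 := by
    intro h0
    apply hlam0
    ext H
    have h := hHv lam H
    rw [h0] at h
    simpa using h.symm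
  have hc2 : 0 < lam (Hv lam) := by
    have h := killing_p_pos σ hσpos (Hv lam : 𝔤) (h𝔞p _ (Hv lam).2) hHvne
    rwa [hHv lam (Hv lam)] at h
  have hc1 : 0 < -(killingForm ℝ 𝔤 Y (σ Y)) := hσpos Y hY0
  -- `⁅Y, σ V⁆ = 0`
  have hQeq : ⁅Y, σ V⁆ = ⁅σ Y, V⁆ :=
    bracket_eq_of_orth σ hσinv hσpos 𝔞 h𝔞ab h𝔞p h𝔞max Hv hHv lam hY hV horth
  have hQfix : σ ⁅Y, σ V⁆ = ⁅Y, σ V⁆ := by rw [LieHom.map_lie, hσinv, ← hQeq]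
  have hQm : ⁅Y, σ V⁆ ∈ mSub σ 𝔞 :=
    ⟨hQfix, fun H => bracket_opp_central hY (fun H' => sigma_root σ hσinv h𝔞p hV H') H⟩
  have hQ0 : ⁅Y, σ V⁆ = 0 := by
    have h := hbr _ hQm
    rw [killing_invariant] at h
    exact ip_zero σ hσpos _ (by rw [hQfix]; exact h)
  -- `⁅Y, σ Y⁆ = β(Y, σY) • H_λ`
  have hbrYY : ⁅Y, σ Y⁆ = (killingForm ℝ 𝔤 Y (σ Y)) • (Hv lam : 𝔤) := by
    rw [← lie_skew Y (σ Y),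
      sigma_bracket_self σ hσinv hσpos 𝔞 h𝔞ab h𝔞p h𝔞max Hv hHv lam hY]
    module
  -- `⁅Y, ⁅σ Y, σ V⁆⁆ = (-(β Y σY) * λ(H_λ)) • σ V`
  have hT : ⁅Y, ⁅σ Y, σ V⁆⁆ = (-(killingForm ℝ 𝔤 Y (σ Y)) * lam (Hv lam)) • σ V := by
    have hjac : ⁅⁅Y, σ Y⁆, σ V⁆ = ⁅Y, ⁅σ Y, σ V⁆⁆ - ⁅σ Y, ⁅Y, σ V⁆⁆ := lie_lie Y (σ Y) (σ V)
    rw [hQ0, lie_zero, sub_zero] at hjac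
    rw [← hjac, hbrYY, smul_lie, sigma_root σ hσinv h𝔞p hV (Hv lam)]
    module
  -- positivity contradiction
  have hfin : 0 ≤ -(killingForm ℝ 𝔤 ⁅Y, V⁆ (σ ⁅Y, V⁆)) := ip_nonneg σ hσpos _
  have hσbr : σ ⁅Y, V⁆ = ⁅σ Y, σ V⁆ := LieHom.map_lie σ Y V
  have hcomp : killingForm ℝ 𝔤 ⁅Y, V⁆ (σ ⁅Y, V⁆) =
      -((-(killingForm ℝ 𝔤 Y (σ Y)) * lam (Hv lam)) * killingForm ℝ 𝔤 V (σ V)) := by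
    rw [hσbr, ← lie_skew Y V, map_neg, LinearMap.neg_apply, killing_invariant, hT,
      map_smul, smul_eq_mul]
  rw [hcomp] at hfin
  have hVnn : 0 ≤ -(killingForm ℝ 𝔤 V (σ V)) := ip_nonneg σ hσpos V
  have hc : 0 < -(killingForm ℝ 𝔤 Y (σ Y)) * lam (Hv lam) := mul_pos hc1 hc2
  have hβV : killingForm ℝ 𝔤 V (σ V) = 0 := by nlinarith
  exact ip_zero σ hσpos V hβV

end Aux5
section Aux6
variable {𝔤 : Type} [LieRing 𝔤] [LieAlgebra ℝ 𝔤]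

lemma surjectivity_lemma [Module.Finite ℝ 𝔤] (σ : 𝔤 →ₗ⁅ℝ⁆ 𝔤) (hσinv : ∀ X, σ (σ X) = X)
    (hσpos : ∀ X : 𝔤, X ≠ 0 → 0 < -(killingForm ℝ 𝔤 X (σ X)))
    (𝔞 : LieSubalgebra ℝ 𝔤)
    (h𝔞ab : ∀ X Y : 𝔤, X ∈ 𝔞 → Y ∈ 𝔞 → ⁅X, Y⁆ = 0)
    (h𝔞p : ∀ X ∈ 𝔞, σ X = -X)
    (h𝔞max : ∀ 𝔟 : LieSubalgebra ℝ 𝔤, (∀ X Y : 𝔤, X ∈ 𝔟 → Y ∈ 𝔟 → ⁅X, Y⁆ = 0) →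
      (∀ X ∈ 𝔟, σ X = -X) → 𝔞 ≤ 𝔟 → 𝔟 = 𝔞)
    (Hv : Module.Dual ℝ 𝔞 → 𝔞)
    (hHv : ∀ (lam : Module.Dual ℝ 𝔞) (H : 𝔞),
      killingForm ℝ 𝔤 (Hv lam : 𝔤) (H : 𝔤) = lam H)
    (lam : Module.Dual ℝ 𝔞) (hlam0 : lam ≠ 0)
    (hdim : 1 < Module.finrank ℝ (rootSpace' 𝔞 lam)) :
    ∀ X ∈ rootSpace' 𝔞 lam, ∃ Z ∈ mSub σ 𝔞, ∃ X' ∈ rootSpace' 𝔞 lam, X = ⁅Z, X'⁆ := by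
  intro X hX
  haveI : FiniteDimensional ℝ 𝔤 := inferInstance
  set E : Submodule ℝ 𝔤 := rootSpace' 𝔞 lam with hE
  letI core : InnerProductSpace.Core ℝ E :=
    { inner := fun u v => -(killingForm ℝ 𝔤 (u : 𝔤) (σ (v : 𝔤)))
      conj_inner_symm := fun x y => by
        simp only [starRingEnd_apply, star_trivial, neg_inj]
        rw [← killing_sigma_swap σ hσinv, killing_symm]
      re_inner_nonneg := fun x => by
        simpa using ip_nonneg σ hσpos (x : 𝔤)
      add_left := fun x y z => by
        simp only [Submodule.coe_add, map_add, LinearMap.add_apply]; ring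
      smul_left := fun x y r => by
        simp only [SetLike.val_smul, map_smul, LinearMap.smul_apply, smul_eq_mul,
          starRingEnd_apply, star_trivial]
        ring
      definite := fun x hx => by
        have : (x : 𝔤) = 0 := ip_zero σ hσpos _ (by
          have h' : -(killingForm ℝ 𝔤 (x : 𝔤) (σ (x : 𝔤))) = 0 := hx
          linarith)
        exact Subtype.ext this }
  letI : NormedAddCommGroup E := core.toNormedAddCommGroup
  letI : InnerProductSpace ℝ E := InnerProductSpace.ofCore core.toCore
  -- choose `Ye ≠ 0` orthogonal to `X`
  let f : E →ₗ[ℝ] ℝ :=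
    { toFun := fun v => killingForm ℝ 𝔤 X (σ (v : 𝔤))
      map_add' := fun a b => by simp
      map_smul' := fun t a => by simp }
  have hker : LinearMap.ker f ≠ ⊥ := by
    intro hbot
    have h1 := LinearMap.finrank_range_add_finrank_ker f
    rw [hbot, finrank_bot] at h1
    have h2 : Module.finrank ℝ (LinearMap.range f) ≤ 1 := by
      simpa using Submodule.finrank_le (LinearMap.range f)
    omega
  obtain ⟨Ye, hYker, hYne⟩ := Submodule.exists_mem_ne_zero_of_ne_bot hker
  have hYg : (Ye : 𝔤) ∈ rootSpace' 𝔞 lam := Ye.2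
  have hYgne : (Ye : 𝔤) ≠ 0 := fun h => hYne (Subtype.ext h)
  -- the bracket map `ψ : 𝔪 → E`
  have hbrmem : ∀ z : mSub σ 𝔞, ⁅(z : 𝔤), (Ye : 𝔤)⁆ ∈ E :=
    fun z => bracket_centralizer_root z.2.2 hYg
  let ψ : (mSub σ 𝔞) →ₗ[ℝ] E :=
    { toFun := fun z => ⟨⁅(z : 𝔤), (Ye : 𝔤)⁆, hbrmem z⟩
      map_add' := fun a b => Subtype.ext (by simp [add_lie])
      map_smul' := fun t a => Subtype.ext (by simp [smul_lie]) }
  set K : Submodule ℝ E := LinearMap.range ψ ⊔ (ℝ ∙ Ye) with hK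
  have hKtop : K = ⊤ := by
    rw [← Submodule.orthogonal_eq_bot_iff]
    rw [Submodule.eq_bot_iff]
    intro v hv
    rw [Submodule.mem_orthogonal] at hv
    have hinnerY : (inner ℝ Ye v : ℝ) = 0 :=
      hv Ye (Submodule.mem_sup_right (Submodule.mem_span_singleton_self Ye))
    have horth' : killingForm ℝ 𝔤 (Ye : 𝔤) (σ (v : 𝔤)) = 0 := by
      have h' : -(killingForm ℝ 𝔤 (Ye : 𝔤) (σ (v : 𝔤))) = 0 := hinnerY
      linarith
    have hbrall : ∀ Z : 𝔤, Z ∈ mSub σ 𝔞 →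
        killingForm ℝ 𝔤 ⁅Z, (Ye : 𝔤)⁆ (σ (v : 𝔤)) = 0 := by
      intro Z hZ
      have h0 := hv (ψ ⟨Z, hZ⟩) (Submodule.mem_sup_left (LinearMap.mem_range_self _ _))
      have h' : -(killingForm ℝ 𝔤 ⁅Z, (Ye : 𝔤)⁆ (σ (v : 𝔤))) = 0 := h0
      linarith
    have hv0 := key_vanishing σ hσinv hσpos 𝔞 h𝔞ab h𝔞p h𝔞max Hv hHv lam hlam0
      hYg hYgne v.2 horth' hbrall
    exact Subtype.ext hv0
  set Xe : E := ⟨X, hX⟩ with hXe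
  have hXeK : Xe ∈ K := hKtop ▸ Submodule.mem_top
  rcases Submodule.mem_sup.1 hXeK with ⟨ρ, hρ, y, hy, hsum⟩
  rcases Submodule.mem_span_singleton.1 hy with ⟨t, rfl⟩
  rcases hρ with ⟨z, rfl⟩
  have hρY : (inner ℝ (ψ z) Ye : ℝ) = 0 := by
    show -(killingForm ℝ 𝔤 ⁅(z : 𝔤), (Ye : 𝔤)⁆ (σ (Ye : 𝔤))) = 0
    rw [killing_invariant]
    have hbr2 : ⁅(Ye : 𝔤), σ (Ye : 𝔤)⁆ =
        (killingForm ℝ 𝔤 (Ye : 𝔤) (σ (Ye : 𝔤))) • (Hv lam : 𝔤) := by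
      rw [← lie_skew (Ye : 𝔤) (σ (Ye : 𝔤)),
        sigma_bracket_self σ hσinv hσpos 𝔞 h𝔞ab h𝔞p h𝔞max Hv hHv lam hYg]
      module
    rw [hbr2, map_smul, smul_eq_mul,
      killing_k_p σ hσinv _ _ z.2.1 (h𝔞p _ (Hv lam).2), mul_zero, neg_zero]
  have hXY : (inner ℝ Xe Ye : ℝ) = 0 := by
    show -(killingForm ℝ 𝔤 X (σ (Ye : 𝔤))) = 0
    have h0 : f Ye = 0 := LinearMap.mem_ker.1 hYker
    have h1 : killingForm ℝ 𝔤 X (σ (Ye : 𝔤)) = 0 := h0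
    linarith
  have hYY : (inner ℝ Ye Ye : ℝ) ≠ 0 := by
    intro h
    exact hYne (core.definite Ye h)
  have hexp : (inner ℝ Xe Ye : ℝ) = inner ℝ (ψ z) Ye + t * inner ℝ Ye Ye := by
    rw [← hsum, inner_add_left, real_inner_smul_left]
  rw [hXY, hρY, zero_add] at hexp
  have ht : t = 0 := by
    rcases mul_eq_zero.1 hexp.symm with h | h
    · exact h
    · exact absurd h hYY
  have hXeq : Xe = ψ z := by
    rw [← hsum, ht, zero_smul, add_zero]
  refine ⟨(z : 𝔤), z.2, (Ye : 𝔤), hYg, ?_⟩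
  have := congrArg (Subtype.val) hXeq
  exact this

end Aux6

/-- If `λ ∈ Σ⁺` has `dim 𝔤_λ > 1`, then every `ℝ`-linear map `α : 𝔫 → ℂ`
vanishing on all brackets `[Z, W]` (`Z ∈ 𝔪`, `W ∈ 𝔫`) vanishes on `𝔤_λ`; equivalently,
every element of `𝔤_λ` is of the form `[Z, X]` with `Z ∈ 𝔪` and `X ∈ 𝔤_λ`. -/
theorem statement4
    (𝔤 : Type) [LieRing 𝔤] [LieAlgebra ℝ 𝔤] [Module.Finite ℝ 𝔤]
    [LieAlgebra.IsSemisimple ℝ 𝔤]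
    -- `σ` is a Cartan involution of `𝔤`:
    (σ : 𝔤 →ₗ⁅ℝ⁆ 𝔤) (hσinv : ∀ X, σ (σ X) = X)
    (hσpos : ∀ X : 𝔤, X ≠ 0 → 0 < -(killingForm ℝ 𝔤 X (σ X)))
    -- `𝔞` is a maximal abelian subalgebra contained in `𝔭 = {X : σ X = -X}`:
    (𝔞 : LieSubalgebra ℝ 𝔤)
    (h𝔞ab : ∀ X Y : 𝔤, X ∈ 𝔞 → Y ∈ 𝔞 → ⁅X, Y⁆ = 0)
    (h𝔞p : ∀ X ∈ 𝔞, σ X = -X)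
    (h𝔞max : ∀ 𝔟 : LieSubalgebra ℝ 𝔤, (∀ X Y : 𝔤, X ∈ 𝔟 → Y ∈ 𝔟 → ⁅X, Y⁆ = 0) →
      (∀ X ∈ 𝔟, σ X = -X) → 𝔞 ≤ 𝔟 → 𝔟 = 𝔞)
    -- `φ` is a basis of `𝔞*` and `Hv lam = H_λ` is determined by the Killing form:
    (r : ℕ) (φ : Module.Basis (Fin r) ℝ (Module.Dual ℝ 𝔞))
    (Hv : Module.Dual ℝ 𝔞 → 𝔞)
    (hHv : ∀ (lam : Module.Dual ℝ 𝔞) (H : 𝔞),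
      killingForm ℝ 𝔤 (Hv lam : 𝔤) (H : 𝔤) = lam H)
    -- `λ ∈ Σ⁺` with `dim 𝔤_λ > 1`:
    (lam : Module.Dual ℝ 𝔞) (hlam : lam ∈ posRootSet 𝔞 φ Hv)
    (hdim : 1 < Module.finrank ℝ (rootSpace' 𝔞 lam)) :
    -- every linear `α : 𝔫 → ℂ` vanishing on `[𝔪, 𝔫]` vanishes on `𝔤_λ` …
    (∀ α : (nSub 𝔞 φ Hv) →ₗ[ℝ] ℂ,
      (∀ (Z W : 𝔤) (_ : Z ∈ mSub σ 𝔞) (_ : W ∈ nSub 𝔞 φ Hv)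
        (h : ⁅Z, W⁆ ∈ nSub 𝔞 φ Hv), α ⟨⁅Z, W⁆, h⟩ = 0) →
      ∀ (X : 𝔤) (_ : X ∈ rootSpace' 𝔞 lam) (hX' : X ∈ nSub 𝔞 φ Hv), α ⟨X, hX'⟩ = 0) ∧
    -- … equivalently, every element of `𝔤_λ` is a bracket `[Z, X]`, `Z ∈ 𝔪`, `X ∈ 𝔤_λ`:
    (∀ X ∈ rootSpace' 𝔞 lam, ∃ Z ∈ mSub σ 𝔞, ∃ X' ∈ rootSpace' 𝔞 lam, X = ⁅Z, X'⁆) := by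
  have hsurj : ∀ X ∈ rootSpace' 𝔞 lam, ∃ Z ∈ mSub σ 𝔞, ∃ X' ∈ rootSpace' 𝔞 lam,
      X = ⁅Z, X'⁆ :=
    surjectivity_lemma σ hσinv hσpos 𝔞 h𝔞ab h𝔞p h𝔞max Hv hHv lam hlam.1 hdim
  refine ⟨?_, hsurj⟩
  intro α hα X hXroot hXn
  obtain ⟨Z, hZ, X', hX', hXeq⟩ := hsurj X hXroot
  have hle : rootSpace' 𝔞 lam ≤ nSub 𝔞 φ Hv :=
    le_iSup₂ (f := fun l (_ : l ∈ posRootSet 𝔞 φ Hv) => rootSpace' 𝔞 l) lam hlam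
  have hX'n : X' ∈ nSub 𝔞 φ Hv := hle hX'
  have hbn : ⁅Z, X'⁆ ∈ nSub 𝔞 φ Hv := hXeq ▸ hXn
  have h0 := hα Z X' hZ hX'n hbn
  have hcast : (⟨X, hXn⟩ : nSub 𝔞 φ Hv) = ⟨⁅Z, X'⁆, hbn⟩ := Subtype.ext hXeq
  rw [hcast]
  exact h0
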